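/- arXiv:0907.1884 — 10 statements merged into one kernel-verified Lean document; each statement's English description precedes it below -/
import Mathlib

section
/- Let ψ₁,…,ψ_m be unit vectors in ℂ^d, let p₁,…,p_m ≥ 0 with Σ p_k = 1, and let W₁,…,W_m > 0 be weights such that S := Σ_ℓ W_ℓ |ψ_ℓ⟩⟨ψ_ℓ| is positive definite on ℂ^d. Let G be the m×m complex matrix with entries G_{ij} = √(W_i W_j) ⟨ψ_i, ψ_j⟩ (which is positive semidefinite), and let G^{1/2} denote its unique positive semidefinite square root. Then the success probability of the Belavkin weighted square-root measurement with weights W_k satisfies Σ_k p_k ⟨ψ_k, M_k ψ_k⟩ = Σ_k (p_k / W_k) · (Re((G^{1/2})_{kk}))². -/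
open Matrix Filter
open scoped ComplexOrder

noncomputable section

/-- The rank-one projector `|ψ⟩⟨ψ|` as a matrix. -/
def proj {d : ℕ} (ψ : Fin d → ℂ) : Matrix (Fin d) (Fin d) ℂ := vecMulVec ψ (star ψ)

/-- The (real) expectation value `⟨ψ, M ψ⟩`. -/
def expVal {d : ℕ} (M : Matrix (Fin d) (Fin d) ℂ) (ψ : Fin d → ℂ) : ℝ :=
  (star ψ ⬝ᵥ M *ᵥ ψ).re

/-- A POVM: a finite family of PSD matrices summing to the identity. -/
def IsPOVM {d m : ℕ} (M : Fin m → Matrix (Fin d) (Fin d) ℂ) : Prop :=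
  (∀ k, (M k).PosSemidef) ∧ ∑ k, M k = 1

/-- The positive semidefinite square root of a positive semidefinite matrix
(definition of Mathlib Dec 2024, since removed). -/
def Matrix.PosSemidef.sqrt {n 𝕜 : Type*} [Fintype n] [RCLike 𝕜] [DecidableEq n]
    {A : Matrix n n 𝕜} (hA : A.PosSemidef) : Matrix n n 𝕜 :=
  hA.1.eigenvectorUnitary.1 * diagonal ((↑) ∘ (√·) ∘ hA.1.eigenvalues) *
  (star hA.1.eigenvectorUnitary : Matrix n n 𝕜)

section sqrtPort
open scoped MatrixOrder

lemma Matrix.PosSemidef.sqrt_eq_cfc_sqrt {n 𝕜 : Type*} [Fintype n] [RCLike 𝕜] [DecidableEq n]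
    {A : Matrix n n 𝕜} (hA : A.PosSemidef) : hA.sqrt = CFC.sqrt A := by
  rw [CFC.sqrt_eq_real_sqrt A hA.nonneg, cfcₙ_eq_cfc (hf0 := Real.sqrt_zero), hA.1.cfc_eq,
    IsHermitian.cfc, Unitary.conjStarAlgAut_apply]
  rfl

lemma Matrix.PosSemidef.posSemidef_sqrt {n 𝕜 : Type*} [Fintype n] [RCLike 𝕜] [DecidableEq n]
    {A : Matrix n n 𝕜} (hA : A.PosSemidef) : hA.sqrt.PosSemidef := by
  rw [hA.sqrt_eq_cfc_sqrt]
  exact (CFC.sqrt_nonneg A).posSemidef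

lemma Matrix.PosSemidef.sqrt_mul_self {n 𝕜 : Type*} [Fintype n] [RCLike 𝕜] [DecidableEq n]
    {A : Matrix n n 𝕜} (hA : A.PosSemidef) : hA.sqrt * hA.sqrt = A := by
  rw [hA.sqrt_eq_cfc_sqrt]
  exact CFC.sqrt_mul_sqrt_self A hA.nonneg

lemma Matrix.PosSemidef.eq_sqrt_of_sq_eq {n 𝕜 : Type*} [Fintype n] [RCLike 𝕜] [DecidableEq n]
    {A B : Matrix n n 𝕜} (hB : B.PosSemidef) (hA : A.PosSemidef) (h : B ^ 2 = A) :
    B = hA.sqrt := by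
  rw [hA.sqrt_eq_cfc_sqrt]
  exact (CFC.sqrt_unique (by rw [← sq]; exact h) hB.nonneg).symm

end sqrtPort


lemma proj_mulVec {d : ℕ} (ψ u : Fin d → ℂ) :
    proj ψ *ᵥ u = (star ψ ⬝ᵥ u) • ψ := by
  ext i
  simp only [proj, mulVec, dotProduct, vecMulVec_apply, Pi.smul_apply, smul_eq_mul]
  rw [Finset.sum_mul]
  exact Finset.sum_congr rfl fun j _ => by ring

lemma dot_TPT {d : ℕ} (T : Matrix (Fin d) (Fin d) ℂ) (ψ φ : Fin d → ℂ) :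
    star φ ⬝ᵥ (T * proj ψ * T) *ᵥ φ
      = (star ψ ⬝ᵥ T *ᵥ φ) * (star φ ⬝ᵥ T *ᵥ ψ) := by
  rw [← mulVec_mulVec, ← mulVec_mulVec, proj_mulVec, mulVec_smul, dotProduct_smul,
    smul_eq_mul]

/-- the success probability of the Belavkin weighted square-root measurement
equals `∑ k (p k / W k) (Re((G^{1/2})_{kk}))²` where `G` is the weighted Gram matrix. -/
theorem bwsrm_success_eq_gram_sqrt {d m : ℕ}
    (ψ : Fin m → Fin d → ℂ) (hψ : ∀ k, star (ψ k) ⬝ᵥ ψ k = 1)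
    (p : Fin m → ℝ) (hp : ∀ k, 0 ≤ p k) (hp1 : ∑ k, p k = 1)
    (W : Fin m → ℝ) (hW : ∀ k, 0 < W k)
    (hS : (∑ ℓ, W ℓ • proj (ψ ℓ)).PosDef)
    (M : Fin m → Matrix (Fin d) (Fin d) ℂ)
    (hM : ∀ k, M k = (hS.posSemidef.sqrt)⁻¹ * (W k • proj (ψ k)) * (hS.posSemidef.sqrt)⁻¹)
    (G : Matrix (Fin m) (Fin m) ℂ)
    (hGdef : G = Matrix.of fun i j => (Real.sqrt (W i * W j) : ℂ) * (star (ψ i) ⬝ᵥ ψ j))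
    (hG : G.PosSemidef) :
    ∑ k, p k * expVal (M k) (ψ k) = ∑ k, (p k / W k) * ((hG.sqrt k k).re) ^ 2 := by
  classical
  set S : Matrix (Fin d) (Fin d) ℂ := ∑ ℓ, W ℓ • proj (ψ ℓ) with hSdef
  set R : Matrix (Fin d) (Fin d) ℂ := hS.posSemidef.sqrt with hRdef
  have hRps : R.PosSemidef := hS.posSemidef.posSemidef_sqrt
  have hRR : R * R = S := hS.posSemidef.sqrt_mul_self
  have hdetR : IsUnit R.det := by
    refine isUnit_iff_ne_zero.mpr fun h => hS.det_pos.ne' ?_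
    rw [← hRR, det_mul, h, mul_zero]
  set T : Matrix (Fin d) (Fin d) ℂ := R⁻¹ with hTdef
  have hT : T.PosSemidef := hRps.inv
  have hTR : T * R = 1 := nonsing_inv_mul R hdetR
  have hRT : R * T = 1 := mul_nonsing_inv R hdetR
  set A : Matrix (Fin d) (Fin m) ℂ :=
    Matrix.of (fun i k => (Real.sqrt (W k) : ℂ) * ψ k i) with hAdef
  have hsqW : ∀ k, (Real.sqrt (W k) : ℂ) * (Real.sqrt (W k) : ℂ) = (W k : ℂ) := fun k => by
    rw [← Complex.ofReal_mul, Real.mul_self_sqrt (hW k).le]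
  have hAAH : A * Aᴴ = S := by
    ext x y
    simp only [hSdef, mul_apply, conjTranspose_apply, hAdef, of_apply, Matrix.sum_apply,
      Matrix.smul_apply, proj, vecMulVec_apply, star_mul', RCLike.star_def, Complex.conj_ofReal,
      Pi.star_apply, Complex.real_smul]
    refine Finset.sum_congr rfl fun k _ => ?_
    linear_combination (ψ k x * (starRingEnd ℂ) (ψ k y)) * hsqW k
  have hAHA : Aᴴ * A = G := by
    ext i j
    simp only [hGdef, mul_apply, conjTranspose_apply, hAdef, of_apply, dotProduct, star_mul',
      RCLike.star_def, Complex.conj_ofReal, Pi.star_apply, Finset.mul_sum,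
      ← Complex.ofReal_mul, Real.sqrt_mul (hW i).le]
    refine Finset.sum_congr rfl fun x _ => ?_
    push_cast
    ring
  have h1 : T * (A * Aᴴ) * T = 1 := by
    rw [hAAH, ← hRR, ← Matrix.mul_assoc T R R, hTR, one_mul, hRT]
  have hB2 : (Aᴴ * T * A) ^ 2 = G := by
    rw [pow_two]
    calc Aᴴ * T * A * (Aᴴ * T * A) = Aᴴ * (T * (A * Aᴴ) * T) * A := by
          simp only [Matrix.mul_assoc]
      _ = G := by rw [h1, Matrix.mul_one, hAHA]
  have hBsqrt : Aᴴ * T * A = hG.sqrt :=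
    (hT.conjTranspose_mul_mul_same A).eq_sqrt_of_sq_eq hG hB2
  refine Finset.sum_congr rfl fun k _ => ?_
  set q : ℂ := star (ψ k) ⬝ᵥ T *ᵥ ψ k with hq
  have hdiag : hG.sqrt k k = (W k : ℂ) * q := by
    rw [← hBsqrt]
    simp only [mul_apply, conjTranspose_apply, hAdef, of_apply, hq, dotProduct, mulVec,
      star_mul', RCLike.star_def, Complex.conj_ofReal, Pi.star_apply,
      Finset.mul_sum, Finset.sum_mul]
    rw [Finset.sum_comm]
    refine Finset.sum_congr rfl fun i _ => Finset.sum_congr rfl fun j _ => ?_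
    linear_combination ((starRingEnd ℂ) (ψ k i) * T i j * ψ k j) * hsqW k
  have hqstar : star q = q := by
    have h1 : star q = star (T *ᵥ ψ k) ⬝ᵥ ψ k := by
      rw [hq, ← star_dotProduct_star (T *ᵥ ψ k) (star (ψ k)), star_star]
    rw [h1, star_mulVec, hT.isHermitian.eq, ← dotProduct_mulVec, hq]
  have him : q.im = 0 := by
    have := congrArg Complex.im hqstar
    simp only [Complex.star_def, Complex.conj_im] at this
    linarith
  have hval : expVal (M k) (ψ k) = W k * (q.re ^ 2) := by
    rw [expVal, hM k, mul_smul_comm, smul_mul_assoc,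
      smul_mulVec, dotProduct_smul]
    rw [dot_TPT T (ψ k) (ψ k), ← hq]
    simp only [Complex.real_smul, Complex.mul_re, Complex.ofReal_re, Complex.ofReal_im,
      him]
    ring
  rw [hval, hdiag]
  have : ((W k : ℂ) * q).re = W k * q.re := by
    simp [Complex.mul_re, him]
  rw [this]
  have hWk : W k ≠ 0 := (hW k).ne'
  field_simp
end
end

section
/- Let ψ₁, ψ₂ be linearly independent unit vectors in ℂ², let p₁, p₂ ≥ 0 with p₁ + p₂ = 1, and let W₁, W₂ > 0. Set c := |⟨ψ₁, ψ₂⟩| and s := √(1 − c²). Then the failure probability of the Belavkin weighted square-root measurement with weights W₁, W₂ equals (p₁ W₂ + p₂ W₁) c² / (W₁ + W₂ + 2 √(W₁ W₂) s). -/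
open Matrix Filter
open scoped ComplexOrder

noncomputable section

/-- The old Mathlib `Matrix.PosSemidef.sqrt` (removed from Mathlib), with its old definition. -/
def posSemidefSqrt {n : Type*} [Fintype n] [DecidableEq n] {A : Matrix n n ℂ}
    (hA : A.PosSemidef) : Matrix n n ℂ :=
  (hA.1.eigenvectorUnitary : Matrix n n ℂ) * diagonal ((↑) ∘ Real.sqrt ∘ hA.1.eigenvalues) *
    (star hA.1.eigenvectorUnitary : Matrix n n ℂ)

open scoped MatrixOrder in
lemma bw_sqrt_eq (A T : Matrix (Fin 2) (Fin 2) ℂ) (hA : A.PosSemidef) (hT : T.PosSemidef)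
    (hTT : T * T = A) : T = posSemidefSqrt hA := by
  have h1 : T = CFC.sqrt A := (CFC.sqrt_unique hTT hT.nonneg).symm
  rw [h1, CFC.sqrt_eq_cfc, cfc_nnreal_eq_real _ A hA.nonneg, hA.1.cfc_eq]
  simp only [IsHermitian.cfc, Unitary.conjStarAlgAut_apply, posSemidefSqrt]
  congr 3
  funext i
  simp only [Function.comp_apply, Real.coe_sqrt, Real.coe_toNNReal _ (hA.eigenvalues_nonneg i)]
  rfl

/-- Cayley–Hamilton for 2×2 matrices. -/
lemma bw_cayley (S : Matrix (Fin 2) (Fin 2) ℂ) : S * S = S.trace • S - S.det • 1 := by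
  ext i j
  fin_cases i <;> fin_cases j <;>
    simp [Matrix.mul_apply, Matrix.trace_fin_two, Matrix.det_fin_two, Fin.sum_univ_two,
      Matrix.one_apply] <;> ring

lemma bw_sq (S : Matrix (Fin 2) (Fin 2) ℂ) (k δ τ d : ℂ)
    (hCH : S * S = τ • S - d • 1)
    (hcoef : k * k * (τ + 2 * δ) = 1) (hd : δ * δ = d) :
    (k • (S + δ • 1)) * (k • (S + δ • 1)) = S := by
  have expand : (k • (S + δ • 1)) * (k • (S + δ • 1))
      = (k*k) • (S * S) + (k*k*(δ+δ)) • S + (k*k*(δ*δ)) • (1 : Matrix (Fin 2) (Fin 2) ℂ) := by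
    simp only [smul_mul_assoc, mul_smul_comm, add_mul, mul_add, one_mul, mul_one, smul_smul,
      smul_add]
    module
  rw [expand, hCH]
  match_scalars
  · linear_combination hcoef
  · linear_combination k*k*hd

lemma bw_inv (S : Matrix (Fin 2) (Fin 2) ℂ) (k e δ τ d : ℂ)
    (hCH : S * S = τ • S - d • 1)
    (hcoef : k * e * (δ * (τ + δ) + d) = 1) :
    (k • (S + δ • 1)) * (e • ((τ + δ) • 1 - S)) = 1 := by
  have expand : (k • (S + δ • 1)) * (e • ((τ + δ) • 1 - S))
      = (k*e*(τ+δ)) • S - (k*e) • (S*S) + (k*e*(δ*(τ+δ))) • (1 : Matrix (Fin 2) (Fin 2) ℂ)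
        - (k*e*δ) • S := by
    simp only [smul_mul_assoc, mul_smul_comm, add_mul, mul_add, mul_sub, sub_mul, one_mul,
      mul_one, smul_smul, smul_add, smul_sub]
    module
  rw [expand, hCH]
  match_scalars
  · ring
  · linear_combination hcoef

lemma bw_sandwich (ψ x : Fin 2 → ℂ) (R : Matrix (Fin 2) (Fin 2) ℂ) (w : ℝ) :
    star x ⬝ᵥ (R * (w • proj ψ) * R) *ᵥ x
      = (w:ℂ) * (star x ⬝ᵥ R *ᵥ ψ) * (star ψ ⬝ᵥ R *ᵥ x) := by
  simp [proj, dotProduct, Matrix.mul_apply, Matrix.mulVec, vecMulVec, Fin.sum_univ_two,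
    Matrix.smul_apply, Complex.real_smul]
  ring

lemma bw_dot_conj (x y : Fin 2 → ℂ) :
    star x ⬝ᵥ y = (starRingEnd ℂ) (star y ⬝ᵥ x) := by
  simp [dotProduct, Fin.sum_univ_two, RCLike.star_def, map_add, _root_.map_mul, Complex.conj_conj]
  ring

lemma bw_trace (ψ₁ ψ₂ : Fin 2 → ℂ) (h1 : star ψ₁ ⬝ᵥ ψ₁ = 1) (h2 : star ψ₂ ⬝ᵥ ψ₂ = 1)
    (W₁ W₂ : ℝ) :
    (W₁ • proj ψ₁ + W₂ • proj ψ₂).trace = ((W₁ + W₂ : ℝ) : ℂ) := by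
  simp only [dotProduct, Fin.sum_univ_two, Pi.star_apply, RCLike.star_def] at h1 h2
  simp [Matrix.trace_fin_two, proj, vecMulVec, Matrix.smul_apply, Complex.real_smul]
  linear_combination (W₁:ℂ) * h1 + (W₂:ℂ) * h2

lemma bw_det (ψ₁ ψ₂ : Fin 2 → ℂ) (h1 : star ψ₁ ⬝ᵥ ψ₁ = 1) (h2 : star ψ₂ ⬝ᵥ ψ₂ = 1)
    (W₁ W₂ : ℝ) (a : ℂ) (ha : a = star ψ₁ ⬝ᵥ ψ₂) :
    (W₁ • proj ψ₁ + W₂ • proj ψ₂).det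
      = ((W₁*W₂ : ℝ) : ℂ) * (1 - a * (starRingEnd ℂ) a) := by
  simp only [dotProduct, Fin.sum_univ_two, Pi.star_apply, RCLike.star_def] at h1 h2 ha
  simp [Matrix.det_fin_two, proj, vecMulVec, Matrix.smul_apply, Complex.real_smul, ha]
  linear_combination (W₁*W₂ : ℂ) * ((starRingEnd ℂ (ψ₂ 0) * ψ₂ 0 + starRingEnd ℂ (ψ₂ 1) * ψ₂ 1) * h1 + h2)

lemma bw_quad (φ χ : Fin 2 → ℂ) (hφ : star φ ⬝ᵥ φ = 1) (W V : ℝ) :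
    star φ ⬝ᵥ (W • proj φ + V • proj χ) *ᵥ φ
      = (W:ℂ) + (V:ℂ) * ((star φ ⬝ᵥ χ) * (starRingEnd ℂ) (star φ ⬝ᵥ χ)) := by
  simp only [dotProduct, Fin.sum_univ_two, Pi.star_apply, RCLike.star_def] at hφ ⊢
  simp [proj, vecMulVec, Matrix.mulVec, dotProduct, Fin.sum_univ_two, Matrix.smul_apply,
    Complex.real_smul, map_add, _root_.map_mul]
  linear_combination ((W:ℂ) * (1 + starRingEnd ℂ (φ 0) * φ 0 + starRingEnd ℂ (φ 1) * φ 1)) * hφ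

/-- the failure probability of the Belavkin weighted square-root measurement
for two linearly independent pure states in `ℂ²` equals
`(p₁W₂ + p₂W₁)c² / (W₁ + W₂ + 2√(W₁W₂)s)`. -/
theorem two_state_bwsrm_failure
    (ψ₁ ψ₂ : Fin 2 → ℂ) (h1 : star ψ₁ ⬝ᵥ ψ₁ = 1) (h2 : star ψ₂ ⬝ᵥ ψ₂ = 1)
    (hli : LinearIndependent ℂ ![ψ₁, ψ₂])
    (p₁ p₂ : ℝ) (hp1 : 0 ≤ p₁) (hp2 : 0 ≤ p₂) (hp : p₁ + p₂ = 1)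
    (W₁ W₂ : ℝ) (hW1 : 0 < W₁) (hW2 : 0 < W₂)
    (hS : (W₁ • proj ψ₁ + W₂ • proj ψ₂).PosDef)
    (M₁ M₂ : Matrix (Fin 2) (Fin 2) ℂ)
    (hM1 : M₁ = (posSemidefSqrt hS.posSemidef)⁻¹ * (W₁ • proj ψ₁) * (posSemidefSqrt hS.posSemidef)⁻¹)
    (hM2 : M₂ = (posSemidefSqrt hS.posSemidef)⁻¹ * (W₂ • proj ψ₂) * (posSemidefSqrt hS.posSemidef)⁻¹)
    (c s : ℝ) (hc : c = ‖star ψ₁ ⬝ᵥ ψ₂‖) (hs : s = Real.sqrt (1 - c ^ 2)) :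
    1 - (p₁ * expVal M₁ ψ₁ + p₂ * expVal M₂ ψ₂)
      = (p₁ * W₂ + p₂ * W₁) * c ^ 2 / (W₁ + W₂ + 2 * Real.sqrt (W₁ * W₂) * s) := by
  set a : ℂ := star ψ₁ ⬝ᵥ ψ₂ with ha
  set S : Matrix (Fin 2) (Fin 2) ℂ := W₁ • proj ψ₁ + W₂ • proj ψ₂ with hSdef
  -- basic complex facts
  have hmc : a * (starRingEnd ℂ) a = ((c^2 : ℝ) : ℂ) := by
    rw [Complex.mul_conj, hc]
    norm_cast
    exact (Complex.sq_norm _).symm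
  have htr : S.trace = ((W₁+W₂:ℝ):ℂ) := bw_trace ψ₁ ψ₂ h1 h2 W₁ W₂
  have hdet : S.det = ((W₁*W₂*(1-c^2):ℝ):ℂ) := by
    rw [hSdef, bw_det ψ₁ ψ₂ h1 h2 W₁ W₂ a ha, hmc]
    push_cast
    ring
  -- positivity of 1 - c²
  have h1c2 : 0 < 1 - c^2 := by
    have hd := hS.det_pos
    rw [hdet, Complex.zero_lt_real] at hd
    nlinarith [mul_pos hW1 hW2]
  have hs2 : s^2 = 1 - c^2 := by rw [hs]; exact Real.sq_sqrt h1c2.le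
  have hspos : 0 < s := by rw [hs]; exact Real.sqrt_pos.2 h1c2
  set r : ℝ := Real.sqrt (W₁*W₂) with hrdef
  have hr2 : r^2 = W₁*W₂ := Real.sq_sqrt (mul_pos hW1 hW2).le
  have hr0 : 0 < r := Real.sqrt_pos.2 (mul_pos hW1 hW2)
  have hP0 : 0 < W₁ + W₂ + 2*r*s := by nlinarith [mul_pos (mul_pos hr0 hspos) (by norm_num : (0:ℝ) < 2)]
  set u : ℝ := Real.sqrt (W₁ + W₂ + 2*r*s) with hudef
  have hu2 : u^2 = W₁ + W₂ + 2*r*s := Real.sq_sqrt hP0.le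
  have hu0 : 0 < u := Real.sqrt_pos.2 hP0
  set e : ℝ := (r*s*(W₁ + W₂ + 2*r*s))⁻¹ * u with hedef
  -- the matrices T (square root of S) and R (inverse of T)
  set T : Matrix (Fin 2) (Fin 2) ℂ := ((u⁻¹:ℝ):ℂ) • (S + ((r*s:ℝ):ℂ) • 1) with hTdef
  set R : Matrix (Fin 2) (Fin 2) ℂ :=
    ((e:ℝ):ℂ) • ((((W₁+W₂:ℝ):ℂ) + ((r*s:ℝ):ℂ)) • 1 - S) with hRdef
  have hCH : S * S = ((W₁+W₂:ℝ):ℂ) • S - ((W₁*W₂*(1-c^2):ℝ):ℂ) • 1 := by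
    rw [bw_cayley S, htr, hdet]
  have hdd : ((r*s:ℝ):ℂ) * ((r*s:ℝ):ℂ) = ((W₁*W₂*(1-c^2):ℝ):ℂ) := by
    norm_cast
    linear_combination s^2 * hr2 + (W₁*W₂) * hs2
  have hTT : T * T = S := by
    rw [hTdef]
    refine bw_sq S _ _ _ _ hCH ?_ hdd
    norm_cast
    rw [show ((W₁+W₂)+2*(r*s):ℝ) = u^2 from by linear_combination -hu2]
    field_simp
  have hTR : T * R = 1 := by
    rw [hTdef, hRdef]
    refine bw_inv S _ _ _ _ _ hCH ?_
    norm_cast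
    have hrsP : r*s*(W₁+W₂+2*r*s) ≠ 0 := by positivity
    rw [show (r*s)*((W₁+W₂)+r*s) + W₁*W₂*(1-c^2) = r*s*(W₁+W₂+2*r*s) from by
      linear_combination (-(s^2))*hr2 + (-(W₁*W₂))*hs2]
    rw [hedef]
    field_simp
  have hT_psd : T.PosSemidef := by
    refine Matrix.PosSemidef.of_dotProduct_mulVec_nonneg ?_ ?_
    · show Tᴴ = T
      rw [hTdef, conjTranspose_smul, conjTranspose_add, conjTranspose_smul, conjTranspose_one,
        hS.1.eq]
      simp [RCLike.star_def, Complex.conj_ofReal]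
    · intro x
      rw [hTdef, smul_mulVec, add_mulVec, smul_mulVec, one_mulVec, dotProduct_smul,
        dotProduct_add, dotProduct_smul, smul_eq_mul, smul_eq_mul]
      refine mul_nonneg (Complex.zero_le_real.2 (by positivity)) ?_
      refine add_nonneg (hS.posSemidef.dotProduct_mulVec_nonneg x) (mul_nonneg (Complex.zero_le_real.2 ?_) ?_)
      · positivity
      · exact dotProduct_star_self_nonneg x
  have hsqrtT : T = posSemidefSqrt hS.posSemidef :=
    bw_sqrt_eq S T hS.posSemidef hT_psd hTT
  have hRinv : T⁻¹ = R := inv_eq_right_inv hTR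
  -- expectation values
  have hSψ1 : star ψ₁ ⬝ᵥ S *ᵥ ψ₁ = ((W₁ + W₂*c^2 : ℝ):ℂ) := by
    rw [hSdef, bw_quad ψ₁ ψ₂ h1 W₁ W₂, ← ha, hmc]
    push_cast; ring
  have hSψ2 : star ψ₂ ⬝ᵥ S *ᵥ ψ₂ = ((W₂ + W₁*c^2 : ℝ):ℂ) := by
    have hcomm : S = W₂ • proj ψ₂ + W₁ • proj ψ₁ := by rw [hSdef, add_comm]
    rw [hcomm, bw_quad ψ₂ ψ₁ h2 W₂ W₁, bw_dot_conj ψ₂ ψ₁, ← ha]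
    rw [show (starRingEnd ℂ) a * (starRingEnd ℂ) ((starRingEnd ℂ) a) = a * (starRingEnd ℂ) a by
      rw [Complex.conj_conj]; ring, hmc]
    push_cast; ring
  have hq1 : star ψ₁ ⬝ᵥ R *ᵥ ψ₁ = ((e*(W₂*(1-c^2)+r*s) : ℝ):ℂ) := by
    rw [hRdef, smul_mulVec, sub_mulVec, smul_mulVec, one_mulVec, dotProduct_smul,
      dotProduct_sub, dotProduct_smul, h1, hSψ1]
    simp only [smul_eq_mul, mul_one]
    push_cast
    ring
  have hq2 : star ψ₂ ⬝ᵥ R *ᵥ ψ₂ = ((e*(W₁*(1-c^2)+r*s) : ℝ):ℂ) := by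
    rw [hRdef, smul_mulVec, sub_mulVec, smul_mulVec, one_mulVec, dotProduct_smul,
      dotProduct_sub, dotProduct_smul, h2, hSψ2]
    simp only [smul_eq_mul, mul_one]
    push_cast
    ring
  have hE1 : expVal M₁ ψ₁ = W₁ * (e*(W₂*(1-c^2)+r*s))^2 := by
    rw [expVal, hM1, ← hsqrtT, hRinv, bw_sandwich, hq1]
    simp only [← Complex.ofReal_mul, Complex.ofReal_re]
    ring
  have hE2 : expVal M₂ ψ₂ = W₂ * (e*(W₁*(1-c^2)+r*s))^2 := by
    rw [expVal, hM2, ← hsqrtT, hRinv, bw_sandwich, hq2]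
    simp only [← Complex.ofReal_mul, Complex.ofReal_re]
    ring
  rw [hE1, hE2]
  -- final real computation
  have hrsP : r*s*(W₁+W₂+2*r*s) ≠ 0 := by positivity
  have he2 : e^2 * (W₁*W₂*s^2*(W₁+W₂+2*r*s)) = 1 := by
    calc e^2 * (W₁*W₂*s^2*(W₁+W₂+2*r*s))
        = ((r*s*(W₁+W₂+2*r*s))⁻¹)^2 * (u^2 * (W₁*W₂*s^2*(W₁+W₂+2*r*s))) := by
          rw [hedef]; ring
      _ = ((r*s*(W₁+W₂+2*r*s))⁻¹)^2 * ((r*s*(W₁+W₂+2*r*s))^2) := by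
          rw [hu2]
          linear_combination (-(((r*s*(W₁+W₂+2*r*s))⁻¹)^2 * s^2*(W₁+W₂+2*r*s)^2)) * hr2
      _ = 1 := by rw [← mul_pow, inv_mul_cancel₀ hrsP]; norm_num
  have hPne : (W₁+W₂+2*r*s) ≠ 0 := hP0.ne'
  have key1m : W₁ * (e*(W₂*(1-c^2)+r*s))^2 * (W₁+W₂+2*r*s)
      = ((W₁+W₂+2*r*s) - W₂*c^2) * (e^2 * (W₁*W₂*s^2*(W₁+W₂+2*r*s))) := by
    linear_combination (e^2*(W₁+W₂+2*r*s)*(W₁*W₂*(W₁-(W₁+W₂+2*r*s)+W₂*c^2))) * hs2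
      + (e^2*(W₁+W₂+2*r*s)*W₁*s^2) * hr2
  have key2m : W₂ * (e*(W₁*(1-c^2)+r*s))^2 * (W₁+W₂+2*r*s)
      = ((W₁+W₂+2*r*s) - W₁*c^2) * (e^2 * (W₁*W₂*s^2*(W₁+W₂+2*r*s))) := by
    linear_combination (e^2*(W₁+W₂+2*r*s)*(W₁*W₂*(W₂-(W₁+W₂+2*r*s)+W₁*c^2))) * hs2
      + (e^2*(W₁+W₂+2*r*s)*W₂*s^2) * hr2
  have key1 : W₁ * (e*(W₂*(1-c^2)+r*s))^2 = 1 - W₂*c^2/(W₁+W₂+2*r*s) := by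
    rw [show (1 : ℝ) - W₂*c^2/(W₁+W₂+2*r*s) = ((W₁+W₂+2*r*s) - W₂*c^2)/(W₁+W₂+2*r*s) from by
      field_simp]
    rw [eq_div_iff hPne, key1m, he2, mul_one]
  have key2 : W₂ * (e*(W₁*(1-c^2)+r*s))^2 = 1 - W₁*c^2/(W₁+W₂+2*r*s) := by
    rw [show (1 : ℝ) - W₁*c^2/(W₁+W₂+2*r*s) = ((W₁+W₂+2*r*s) - W₁*c^2)/(W₁+W₂+2*r*s) from by
      field_simp]
    rw [eq_div_iff hPne, key2m, he2, mul_one]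
  rw [key1, key2]
  field_simp
  linear_combination (-(W₁+W₂+2*r*s))*hp
end
end

section
/- For all p ∈ [0,1] and c ∈ [0,1], with s := √(1 − c²), the inequality 2 p (1−p) c² / (1 + 2 √(p(1−p)) s) ≥ p (1−p) c² / (p² + (1−p)² + 2 p (1−p) s) holds; that is, for binary pure-state ensembles the failure rate of the pretty good measurement is at least that of Holevo's quadratically weighted measurement, P_fail^PGM ≥ P_fail^Holevo. Moreover, equality holds if and only if p ∈ {0, 1/2, 1} or c = 0. -/
set_option maxHeartbeats 800000


/-- for binary pure-state ensembles the pretty good measurement's failure rate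
is at least that of Holevo's quadratically weighted measurement, with equality iff
`p ∈ {0, 1/2, 1}` or `c = 0`. -/
theorem pgm_ge_holevo_binary (p c : ℝ) (hp : p ∈ Set.Icc (0:ℝ) 1) (hc : c ∈ Set.Icc (0:ℝ) 1) :
    2*p*(1-p)*c^2 / (1 + 2*Real.sqrt (p*(1-p)) * Real.sqrt (1-c^2))
      ≥ p*(1-p)*c^2 / (p^2 + (1-p)^2 + 2*p*(1-p)*Real.sqrt (1-c^2))
    ∧ (2*p*(1-p)*c^2 / (1 + 2*Real.sqrt (p*(1-p)) * Real.sqrt (1-c^2))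
        = p*(1-p)*c^2 / (p^2 + (1-p)^2 + 2*p*(1-p)*Real.sqrt (1-c^2))
      ↔ (p = 0 ∨ p = 1/2 ∨ p = 1 ∨ c = 0)) := by
  obtain ⟨hp0, hp1⟩ := hp
  obtain ⟨hc0, hc1⟩ := hc
  set s := Real.sqrt (1 - c^2) with hs_def
  set r := Real.sqrt (p*(1-p)) with hr_def
  have hs0 : 0 ≤ s := Real.sqrt_nonneg _
  have hs2 : s^2 = 1 - c^2 := Real.sq_sqrt (by nlinarith [sq_nonneg c])
  have hs1 : s ≤ 1 := by nlinarith
  have hr0 : 0 ≤ r := Real.sqrt_nonneg _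
  have hr2 : r^2 = p*(1-p) := Real.sq_sqrt (by nlinarith)
  have hrhalf : r ≤ 1/2 := by nlinarith [hr2, sq_nonneg (2*p-1)]
  have hd1 : 0 < 1 + 2*r*s := by nlinarith
  have hd2 : 0 < p^2 + (1-p)^2 + 2*p*(1-p)*s := by nlinarith
  have hmain : 2*p*(1-p)*c^2*(p^2 + (1-p)^2 + 2*p*(1-p)*s)
      - p*(1-p)*c^2*(1 + 2*r*s)
      = r^2*c^2*(1-2*r)*(1+2*r-2*r*s) := by
    linear_combination (-(c^2*(1 - 4*(p*(1-p)+r^2) + 4*s*(p*(1-p)+r^2) - 2*r*s))) * hr2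
  have hfpos : 0 < 1 + 2*r - 2*r*s := by nlinarith
  have hprod : 0 ≤ r^2*c^2*(1-2*r)*(1+2*r-2*r*s) := by
    apply mul_nonneg
    apply mul_nonneg
    · exact mul_nonneg (sq_nonneg r) (sq_nonneg c)
    · linarith
    · linarith
  constructor
  · rw [ge_iff_le, div_le_div_iff₀ hd2 hd1]
    linarith [hmain, hprod]
  · rw [div_eq_div_iff hd1.ne' hd2.ne']
    constructor
    · intro h
      have h0 : r^2*c^2*(1-2*r)*(1+2*r-2*r*s) = 0 := by linarith [hmain]
      have h1 : r^2*c^2*(1-2*r) = 0 := by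
        rcases mul_eq_zero.mp h0 with h' | h'
        · exact h'
        · linarith
      rcases mul_eq_zero.mp h1 with h' | h'
      · rcases mul_eq_zero.mp h' with h'' | h''
        · -- r^2 = 0, so p(1-p) = 0
          have hpq : p*(1-p) = 0 := by rw [← hr2]; exact h''
          rcases mul_eq_zero.mp hpq with h3 | h3
          · exact Or.inl h3
          · exact Or.inr (Or.inr (Or.inl (by linarith)))
        · exact Or.inr (Or.inr (Or.inr (pow_eq_zero_iff (by norm_num) |>.mp h'')))
      · -- r = 1/2, so p(1-p) = 1/4, so p = 1/2
        have hr : r = 1/2 := by linarith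
        have : (p - 1/2)^2 = 0 := by nlinarith [hr2]
        have := pow_eq_zero_iff (n := 2) (by norm_num) |>.mp this
        exact Or.inr (Or.inl (by linarith))
    · intro h
      have hz : r^2*c^2*(1-2*r)*(1+2*r-2*r*s) = 0 := by
        rcases h with h | h | h | h
        · have : r^2 = 0 := by rw [hr2, h]; ring
          rw [this]; ring
        · have h14 : r^2 = 1/4 := by rw [hr2, h]; norm_num
          have hfac : (r - 1/2)*(r + 1/2) = 0 := by linear_combination h14
          rcases mul_eq_zero.mp hfac with h' | h'
          · have : r = 1/2 := by linarith
            rw [this]; ring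
          · linarith
        · have : r^2 = 0 := by rw [hr2, h]; ring
          rw [this]; ring
        · rw [h]; ring
      linarith [hmain, hz]
end

section
/- The supremum of the set { F_PGM(p,c) / F_opt(p,c) : p ∈ (0,1), c ∈ (0,1] } equals 2, where F_PGM(p,c) = 2p(1−p)c²/(1 + 2√(p(1−p))√(1−c²)) and F_opt(p,c) = 1/2 − √(1/4 − p(1−p)c²). That is, over binary pure-state ensembles the worst-case ratio of the failure rate of the pretty good measurement to the optimal failure rate is exactly 2. -/
/-- over binary pure-state ensembles the worst-case ratio of the failure rate of
the pretty good measurement to the optimal failure rate is exactly 2 (as a supremum). -/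
theorem pgm_worst_case_ratio :
    IsLUB {r : ℝ | ∃ p c : ℝ, p ∈ Set.Ioo (0:ℝ) 1 ∧ c ∈ Set.Ioc (0:ℝ) 1 ∧
      r = (2*p*(1-p)*c^2 / (1 + 2*Real.sqrt (p*(1-p)) * Real.sqrt (1-c^2))) /
          (1/2 - Real.sqrt (1/4 - p*(1-p)*c^2))} 2 := by
  constructor
  · rintro r ⟨p, c, ⟨hp0, hp1⟩, ⟨hc0, hc1⟩, rfl⟩
    have hq : 0 < p*(1-p) := by nlinarith
    have hq4 : p*(1-p) ≤ 1/4 := by nlinarith [sq_nonneg (p - 1/2)]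
    have hc2 : c^2 ≤ 1 := by nlinarith
    have hx0 : 0 < p*(1-p)*c^2 := by positivity
    have hx4 : p*(1-p)*c^2 ≤ 1/4 := by nlinarith
    have hs : Real.sqrt (1/4 - p*(1-p)*c^2) ≤ 1/2 - p*(1-p)*c^2 := by
      have h1 : 1/4 - p*(1-p)*c^2 ≤ (1/2 - p*(1-p)*c^2)^2 := by nlinarith
      calc Real.sqrt (1/4 - p*(1-p)*c^2) ≤ Real.sqrt ((1/2 - p*(1-p)*c^2)^2) :=
            Real.sqrt_le_sqrt h1
        _ = 1/2 - p*(1-p)*c^2 := Real.sqrt_sq (by linarith)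
    have hD : 0 < 1/2 - Real.sqrt (1/4 - p*(1-p)*c^2) := by linarith
    have hE : (1:ℝ) ≤ 1 + 2*Real.sqrt (p*(1-p)) * Real.sqrt (1-c^2) := by
      have h1 := Real.sqrt_nonneg (p*(1-p))
      have h2 := Real.sqrt_nonneg (1-c^2)
      nlinarith
    have hEpos : (0:ℝ) < 1 + 2*Real.sqrt (p*(1-p)) * Real.sqrt (1-c^2) := by linarith
    rw [div_div, div_le_iff₀ (by positivity)]
    have hxD : p*(1-p)*c^2 ≤ 1/2 - Real.sqrt (1/4 - p*(1-p)*c^2) := by linarith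
    nlinarith [mul_le_mul hE hxD hx0.le hEpos.le]
  · intro y hy
    by_contra h
    push_neg at h
    set p : ℝ := min ((2-y)/8) (1/2) with hpdef
    have hp0 : 0 < p := lt_min (by linarith) (by norm_num)
    have hp1 : p < 1 := lt_of_le_of_lt (min_le_right _ _) (by norm_num)
    have hpy : p ≤ (2-y)/8 := min_le_left _ _
    have hq : 0 < p*(1-p) := by nlinarith
    have hq4 : p*(1-p) ≤ 1/4 := by nlinarith [sq_nonneg (p - 1/2)]
    have hqp : p*(1-p) ≤ p := by nlinarith
    set s : ℝ := Real.sqrt (1/4 - p*(1-p)) with hsdef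
    have hs0 : 0 ≤ s := Real.sqrt_nonneg _
    have hs2 : s^2 = 1/4 - p*(1-p) := Real.sq_sqrt (by linarith)
    have hslt : s < 1/2 := by nlinarith
    have hsge : 1/2 - 2*(p*(1-p)) ≤ s := by
      have h1 : (1/2 - 2*(p*(1-p)))^2 ≤ 1/4 - p*(1-p) := by nlinarith
      calc 1/2 - 2*(p*(1-p)) = Real.sqrt ((1/2 - 2*(p*(1-p)))^2) :=
            (Real.sqrt_sq (by linarith)).symm
        _ ≤ s := Real.sqrt_le_sqrt h1
    have hmem : (2*p*(1-p)*(1:ℝ)^2 / (1 + 2*Real.sqrt (p*(1-p)) * Real.sqrt (1-(1:ℝ)^2))) /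
          (1/2 - Real.sqrt (1/4 - p*(1-p)*(1:ℝ)^2)) ∈
        {r : ℝ | ∃ p c : ℝ, p ∈ Set.Ioo (0:ℝ) 1 ∧ c ∈ Set.Ioc (0:ℝ) 1 ∧
          r = (2*p*(1-p)*c^2 / (1 + 2*Real.sqrt (p*(1-p)) * Real.sqrt (1-c^2))) /
              (1/2 - Real.sqrt (1/4 - p*(1-p)*c^2))} :=
      ⟨p, 1, ⟨hp0, hp1⟩, ⟨one_pos, le_refl 1⟩, rfl⟩
    have hle := hy hmem
    have hsimp : (2*p*(1-p)*(1:ℝ)^2 / (1 + 2*Real.sqrt (p*(1-p)) * Real.sqrt (1-(1:ℝ)^2))) /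
          (1/2 - Real.sqrt (1/4 - p*(1-p)*(1:ℝ)^2)) = 2*(p*(1-p)) / (1/2 - s) := by
      norm_num [Real.sqrt_zero, hsdef]
      ring_nf
    rw [hsimp] at hle
    have hDpos : 0 < 1/2 - s := by linarith
    have hval : 2*(p*(1-p)) / (1/2 - s) = 1 + 2*s := by
      rw [div_eq_iff hDpos.ne']
      nlinarith
    rw [hval] at hle
    -- 1 + 2*s ≥ 1 + 2*(1/2 - 2*p*(1-p)) = 2 - 4*p*(1-p) ≥ 2 - 4*p > y
    have : 2 - 4*p ≤ 1 + 2*s := by linarith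
    linarith
end

section
/- The value (√2 + 1)/2 is the greatest element of the set { F_Hol(p,c) / F_opt(p,c) : p ∈ (0,1), c ∈ (0,1] }, where F_Hol(p,c) = p(1−p)c²/(p² + (1−p)² + 2p(1−p)√(1−c²)) and F_opt(p,c) = 1/2 − √(1/4 − p(1−p)c²); the maximum is attained at p = √2/2, c = 1. That is, over binary pure-state ensembles the worst-case ratio of the failure rate of Holevo's quadratically weighted measurement to the optimal failure rate is exactly (√2+1)/2 ≈ 1.207. -/
set_option maxHeartbeats 1000000

lemma holevo_eq_aux :
    ((Real.sqrt 2/2)*(1-Real.sqrt 2/2)*1^2 /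
          ((Real.sqrt 2/2)^2 + (1-Real.sqrt 2/2)^2
            + 2*(Real.sqrt 2/2)*(1-Real.sqrt 2/2)*Real.sqrt (1-1^2))) /
        (1/2 - Real.sqrt (1/4 - (Real.sqrt 2/2)*(1-Real.sqrt 2/2)*1^2))
      = (Real.sqrt 2 + 1)/2 := by
  set w := Real.sqrt 2 with hw
  have hw2 : w^2 = 2 := Real.sq_sqrt (by norm_num)
  have hw0 : 0 ≤ w := Real.sqrt_nonneg 2
  have hw1 : 1 ≤ w := by nlinarith
  have hwlt : w < 3/2 := by nlinarith
  have h0 : (1:ℝ) - 1^2 = 0 := by norm_num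
  rw [h0, Real.sqrt_zero]
  have h1 : 1/4 - (w/2)*(1-w/2)*1^2 = ((w-1)/2)^2 := by ring
  rw [h1, Real.sqrt_sq (by linarith : (0:ℝ) ≤ (w-1)/2)]
  have hd1 : (w/2)^2 + (1-w/2)^2 + 2*(w/2)*(1-w/2)*0 = 2 - w := by nlinarith
  rw [hd1]
  have hd2 : (2:ℝ) - w ≠ 0 := by nlinarith
  have hd3 : 1/2 - (w-1)/2 = (2-w)/2 := by ring
  rw [hd3, div_div, div_eq_iff (by positivity : (2-w)*((2-w)/2) ≠ 0)]
  linear_combination (1/2 - w/4) * hw2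

/-- over binary pure-state ensembles, the worst-case ratio of the failure rate of
Holevo's quadratically weighted measurement to the optimal failure rate is exactly
`(√2 + 1)/2`, attained at `p = √2/2`, `c = 1`. -/
theorem holevo_worst_case_ratio :
    IsGreatest {r : ℝ | ∃ p c : ℝ, p ∈ Set.Ioo (0:ℝ) 1 ∧ c ∈ Set.Ioc (0:ℝ) 1 ∧
      r = (p*(1-p)*c^2 / (p^2 + (1-p)^2 + 2*p*(1-p)*Real.sqrt (1-c^2))) /
          (1/2 - Real.sqrt (1/4 - p*(1-p)*c^2))} ((Real.sqrt 2 + 1)/2)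
    ∧ ((Real.sqrt 2/2)*(1-Real.sqrt 2/2)*1^2 /
          ((Real.sqrt 2/2)^2 + (1-Real.sqrt 2/2)^2
            + 2*(Real.sqrt 2/2)*(1-Real.sqrt 2/2)*Real.sqrt (1-1^2))) /
        (1/2 - Real.sqrt (1/4 - (Real.sqrt 2/2)*(1-Real.sqrt 2/2)*1^2))
      = (Real.sqrt 2 + 1)/2 := by
  have hw2 : (Real.sqrt 2)^2 = 2 := Real.sq_sqrt (by norm_num)
  have hw0 : 0 ≤ Real.sqrt 2 := Real.sqrt_nonneg 2
  have hw1 : 1 ≤ Real.sqrt 2 := by nlinarith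
  have hwlt : Real.sqrt 2 < 3/2 := by nlinarith
  refine ⟨⟨⟨Real.sqrt 2/2, 1, ⟨by linarith, by linarith⟩, ⟨by norm_num, le_refl 1⟩,
      holevo_eq_aux.symm⟩, ?_⟩, holevo_eq_aux⟩
  rintro r ⟨p, c, ⟨hp0, hp1⟩, ⟨hc0, hc1⟩, rfl⟩
  set w := Real.sqrt 2 with hwdef
  set s := Real.sqrt (1 - c^2) with hsdef
  set a := Real.sqrt (1/4 - p*(1-p)*c^2) with hadef
  have hc2 : c^2 ≤ 1 := by nlinarith
  have hq0 : 0 < p*(1-p) := by nlinarith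
  have hq4 : p*(1-p) ≤ 1/4 := by nlinarith [sq_nonneg (2*p-1)]
  have hs0 : 0 ≤ s := Real.sqrt_nonneg _
  have hs2 : s^2 = 1 - c^2 := Real.sq_sqrt (by linarith)
  have hs1 : s ≤ 1 := by nlinarith
  have ha0 : 0 ≤ a := Real.sqrt_nonneg _
  have ha2 : a^2 = 1/4 - p*(1-p)*c^2 := Real.sq_sqrt (by nlinarith)
  have halt : a < 1/2 := by nlinarith [mul_pos hq0 (mul_pos hc0 hc0)]
  have hden : 0 < p^2 + (1-p)^2 + 2*p*(1-p)*s := by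
    nlinarith [mul_nonneg hq0.le hs0, sq_nonneg p]
  have hfop : 0 < 1/2 - a := by linarith
  -- key inequality: 1/2 + a ≤ (w+1)/2 * den
  have hM : 0 ≤ (w+1)/2 * (p^2 + (1-p)^2 + 2*p*(1-p)*s) - 1/2 := by
    nlinarith [mul_nonneg hq0.le hs0, sq_nonneg (2*p-1)]
  have key : a ≤ (w+1)/2 * (p^2 + (1-p)^2 + 2*p*(1-p)*s) - 1/2 := by
    nlinarith [sq_nonneg ((w+1)*(p^2 + (1-p)^2 + 2*p*(1-p)*s) - w),
      mul_nonneg (mul_nonneg hq0.le hs0) (by linarith : (0:ℝ) ≤ 1 - s), hM, ha0]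
  rw [div_div, div_le_iff₀ (by positivity)]
  nlinarith [mul_nonneg hfop.le (by linarith :
    (0 : ℝ) ≤ (w+1)/2 * (p^2 + (1-p)^2 + 2*p*(1-p)*s) - 1/2 - a)]
end

section
/- Fix p ∈ (0,1) and weights W₁, W₂ > 0, and set p₁ = p, p₂ = 1−p, c₁ = W₁/p₁², c₂ = W₂/p₂². Then the limit as c → 0⁺ of the ratio F_W(p,c) / F_opt(p,c) exists and equals (c₁ p₁ + c₂ p₂) / (√c₁ p₁ + √c₂ p₂)², where F_W(p,c) = (p₁ W₂ + p₂ W₁) c² / (W₁ + W₂ + 2√(W₁W₂)√(1−c²)) and F_opt(p,c) = 1/2 − √(1/4 − p₁ p₂ c²). -/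
/-- the limit as `c → 0⁺` of the ratio of the weighted measurement's failure rate
to the optimal failure rate for binary ensembles is `(c₁p₁ + c₂p₂)/(√c₁ p₁ + √c₂ p₂)²`,
where `cₖ = Wₖ/pₖ²`. -/
theorem bwsrm_ratio_limit (p W₁ W₂ : ℝ) (hp : p ∈ Set.Ioo (0:ℝ) 1)
    (hW1 : 0 < W₁) (hW2 : 0 < W₂)
    (p₁ p₂ c₁ c₂ : ℝ) (hp1 : p₁ = p) (hp2 : p₂ = 1 - p)
    (hc1 : c₁ = W₁ / p₁^2) (hc2 : c₂ = W₂ / p₂^2) :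
    Filter.Tendsto (fun c : ℝ =>
        ((p₁*W₂ + p₂*W₁)*c^2 / (W₁ + W₂ + 2*Real.sqrt (W₁*W₂)*Real.sqrt (1-c^2))) /
        (1/2 - Real.sqrt (1/4 - p₁*p₂*c^2)))
      (nhdsWithin 0 (Set.Ioi 0))
      (nhds ((c₁*p₁ + c₂*p₂) / (Real.sqrt c₁ * p₁ + Real.sqrt c₂ * p₂)^2)) := by
  obtain ⟨hp0, hplt⟩ := hp
  subst hp1 hp2 hc1 hc2
  have hp2pos : (0:ℝ) < 1 - p₁ := by linarith
  set q : ℝ := p₁ * (1 - p₁) with hq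
  have hqpos : 0 < q := mul_pos hp0 hp2pos
  set A : ℝ := p₁ * W₂ + (1 - p₁) * W₁ with hA
  have hApos : 0 < A := by positivity
  have hsW : Real.sqrt (W₁ * W₂) = Real.sqrt W₁ * Real.sqrt W₂ := Real.sqrt_mul hW1.le _
  set g : ℝ → ℝ := fun c =>
    A * (1/2 + Real.sqrt (1/4 - q * c^2)) /
      (q * (W₁ + W₂ + 2 * Real.sqrt (W₁ * W₂) * Real.sqrt (1 - c^2))) with hg
  have hD0 : (0:ℝ) < W₁ + W₂ + 2 * Real.sqrt (W₁ * W₂) * Real.sqrt (1 - (0:ℝ)^2) := by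
    have h : (0:ℝ) ≤ Real.sqrt (W₁ * W₂) * Real.sqrt (1 - (0:ℝ)^2) := by positivity
    nlinarith
  -- g is continuous at 0
  have hcont : ContinuousAt g 0 := by
    apply ContinuousAt.div
    · fun_prop
    · fun_prop
    · have := hD0
      positivity
  have hL : g 0 = (W₁ / p₁^2 * p₁ + W₂ / (1 - p₁)^2 * (1 - p₁)) /
      (Real.sqrt (W₁ / p₁^2) * p₁ + Real.sqrt (W₂ / (1 - p₁)^2) * (1 - p₁))^2 := by
    have h1 : Real.sqrt (W₁ / p₁^2) = Real.sqrt W₁ / p₁ := by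
      rw [Real.sqrt_div hW1.le, Real.sqrt_sq hp0.le]
    have h2 : Real.sqrt (W₂ / (1 - p₁)^2) = Real.sqrt W₂ / (1 - p₁) := by
      rw [Real.sqrt_div hW2.le, Real.sqrt_sq hp2pos.le]
    have h14 : Real.sqrt (1/4 - q * (0:ℝ)^2) = 1/2 := by
      have e : (1:ℝ)/4 - q * (0:ℝ)^2 = (1/2)^2 := by norm_num
      rw [e, Real.sqrt_sq]; norm_num
    have h11 : Real.sqrt (1 - (0:ℝ)^2) = 1 := by norm_num
    have hs1pos : 0 < Real.sqrt W₁ := Real.sqrt_pos.mpr hW1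
    have hs2pos : 0 < Real.sqrt W₂ := Real.sqrt_pos.mpr hW2
    rw [hg]
    simp only [h14, h11, h1, h2, hsW]
    have e1 : Real.sqrt W₁ / p₁ * p₁ = Real.sqrt W₁ := div_mul_cancel₀ _ hp0.ne'
    have e2 : Real.sqrt W₂ / (1 - p₁) * (1 - p₁) = Real.sqrt W₂ :=
      div_mul_cancel₀ _ hp2pos.ne'
    rw [e1, e2]
    have hden : (Real.sqrt W₁ + Real.sqrt W₂)^2
        = W₁ + W₂ + 2 * (Real.sqrt W₁ * Real.sqrt W₂) := by
      rw [add_sq, Real.sq_sqrt hW1.le, Real.sq_sqrt hW2.le]; ring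
    rw [hden, hq, hA]
    have hd2 : (0:ℝ) < W₁ + W₂ + 2 * (Real.sqrt W₁ * Real.sqrt W₂) := by positivity
    field_simp
    ring
  have htg : Filter.Tendsto g (nhdsWithin 0 (Set.Ioi 0))
      (nhds ((W₁ / p₁^2 * p₁ + W₂ / (1 - p₁)^2 * (1 - p₁)) /
      (Real.sqrt (W₁ / p₁^2) * p₁ + Real.sqrt (W₂ / (1 - p₁)^2) * (1 - p₁))^2)) := by
    rw [← hL]
    exact hcont.continuousWithinAt.tendsto
  refine htg.congr' ?_
  have h1mem : ∀ᶠ c in nhdsWithin (0:ℝ) (Set.Ioi 0), c < 1 :=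
    nhdsWithin_le_nhds (Iio_mem_nhds (by norm_num))
  filter_upwards [self_mem_nhdsWithin, h1mem] with c hc hclt
  have hc0 : (0:ℝ) < c := hc
  have hc2lt : c^2 < 1 := by nlinarith
  have hqle : q ≤ 1/4 := by rw [hq]; nlinarith [sq_nonneg (p₁ - 1/2)]
  have hx0 : 0 ≤ 1/4 - q * c^2 := by nlinarith
  have hxlt : Real.sqrt (1/4 - q * c^2) < 1/2 := by
    rw [Real.sqrt_lt' (by norm_num)]
    nlinarith [mul_pos hqpos (pow_pos hc0 2)]
  have hxsq : Real.sqrt (1/4 - q * c^2) * Real.sqrt (1/4 - q * c^2) = 1/4 - q * c^2 :=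
    Real.mul_self_sqrt hx0
  have hhalf : 0 < 1/2 + Real.sqrt (1/4 - q * c^2) := by
    have := Real.sqrt_nonneg (1/4 - q * c^2); linarith
  have hDpos : 0 < W₁ + W₂ + 2 * Real.sqrt (W₁ * W₂) * Real.sqrt (1 - c^2) := by
    have h : (0:ℝ) ≤ Real.sqrt (W₁ * W₂) * Real.sqrt (1 - c^2) := by positivity
    nlinarith
  have key : 1/2 - Real.sqrt (1/4 - q * c^2)
      = q * c^2 / (1/2 + Real.sqrt (1/4 - q * c^2)) := by
    rw [eq_div_iff hhalf.ne']
    linear_combination (-1 : ℝ) * hxsq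
  rw [hg]
  have hAc : p₁ * W₂ + (1 - p₁) * W₁ = A := rfl
  have hqc : p₁ * (1 - p₁) = q := rfl
  simp only [hqc, hAc]
  rw [key]
  field_simp
end

section
/- Fix p ∈ (0,1) and weights W₁, W₂ > 0, and set p₁ = p, p₂ = 1−p. If the limit as c → 0⁺ of F_W(p,c) / F_opt(p,c) equals 1, where F_W(p,c) = (p₁W₂ + p₂W₁)c²/(W₁ + W₂ + 2√(W₁W₂)√(1−c²)) and F_opt(p,c) = 1/2 − √(1/4 − p₁p₂c²), then W₁ p₂² = W₂ p₁², i.e. W₁/p₁² = W₂/p₂². In other words, a Belavkin weighted square-root measurement for binary ensembles is asymptotically optimal (its failure rate ratio to the optimum tends to 1 as the states approach orthogonality) only if its weights are proportional to the squares of the prior probabilities. -/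
/-- converse to Holevo's asymptotic optimality theorem, binary case: if the
failure-rate ratio of a Belavkin weighted square-root measurement to the optimum tends to 1
as the two states approach orthogonality, then the weights are proportional to the squares of
the priors: `W₁ p₂² = W₂ p₁²`. -/
theorem asymptotically_optimal_only_if_quadratic (p W₁ W₂ : ℝ) (hp : p ∈ Set.Ioo (0:ℝ) 1)
    (hW1 : 0 < W₁) (hW2 : 0 < W₂)
    (p₁ p₂ : ℝ) (hp1 : p₁ = p) (hp2 : p₂ = 1 - p)
    (hlim : Filter.Tendsto (fun c : ℝ =>
        ((p₁*W₂ + p₂*W₁)*c^2 / (W₁ + W₂ + 2*Real.sqrt (W₁*W₂)*Real.sqrt (1-c^2))) /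
        (1/2 - Real.sqrt (1/4 - p₁*p₂*c^2)))
      (nhdsWithin 0 (Set.Ioi 0)) (nhds 1)) :
    W₁ * p₂^2 = W₂ * p₁^2 := by
  obtain ⟨hp0, hp1'⟩ := hp
  rw [hp1, hp2] at hlim ⊢
  have hq : 0 < p * (1 - p) := mul_pos hp0 (by linarith)
  set g : ℝ → ℝ := fun c =>
    (p*W₂ + (1-p)*W₁) * (1/2 + Real.sqrt (1/4 - p*(1-p)*c^2)) /
      ((W₁ + W₂ + 2*Real.sqrt (W₁*W₂)*Real.sqrt (1-c^2)) * (p*(1-p))) with hg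
  -- eventual equality
  have hmem : Set.Ioo (0:ℝ) 1 ∈ nhdsWithin (0:ℝ) (Set.Ioi 0) := by
    have h1 : Set.Iio (1:ℝ) ∈ nhdsWithin (0:ℝ) (Set.Ioi 0) :=
      mem_nhdsWithin_of_mem_nhds (Iio_mem_nhds one_pos)
    have h2 : Set.Ioi (0:ℝ) ∈ nhdsWithin (0:ℝ) (Set.Ioi 0) := self_mem_nhdsWithin
    have := Filter.inter_mem h2 h1
    simpa [Set.Ioi_inter_Iio] using this
  have hEq : (fun c : ℝ =>
        ((p*W₂ + (1-p)*W₁)*c^2 / (W₁ + W₂ + 2*Real.sqrt (W₁*W₂)*Real.sqrt (1-c^2))) /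
        (1/2 - Real.sqrt (1/4 - p*(1-p)*c^2))) =ᶠ[nhdsWithin 0 (Set.Ioi 0)] g := by
    filter_upwards [hmem] with c hc
    obtain ⟨hc0, hc1⟩ := hc
    have hc2 : c^2 ≤ 1 := by nlinarith
    have hX : (0:ℝ) ≤ 1/4 - p*(1-p)*c^2 := by
      nlinarith [sq_nonneg (1-2*p), mul_nonneg hq.le (by linarith : (0:ℝ) ≤ 1 - c^2)]
    have hsX : Real.sqrt (1/4 - p*(1-p)*c^2) * Real.sqrt (1/4 - p*(1-p)*c^2)
        = 1/4 - p*(1-p)*c^2 := Real.mul_self_sqrt hX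
    have hS : (0:ℝ) < 1/2 + Real.sqrt (1/4 - p*(1-p)*c^2) := by
      have := Real.sqrt_nonneg (1/4 - p*(1-p)*c^2); linarith
    have hD : (0:ℝ) < W₁ + W₂ + 2*Real.sqrt (W₁*W₂)*Real.sqrt (1-c^2) := by
      have h1 := Real.sqrt_nonneg (W₁*W₂)
      have h2 := Real.sqrt_nonneg (1-c^2)
      nlinarith
    have h1 : 1/2 - Real.sqrt (1/4 - p*(1-p)*c^2)
        = p*(1-p)*c^2 / (1/2 + Real.sqrt (1/4 - p*(1-p)*c^2)) := by
      rw [eq_div_iff hS.ne']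
      nlinarith [hsX]
    rw [h1]
    simp only [hg]
    have hcne : (c:ℝ)^2 ≠ 0 := by positivity
    field_simp
  have hg1 : Filter.Tendsto g (nhdsWithin 0 (Set.Ioi 0)) (nhds (g 0)) := by
    have hc : ContinuousAt g 0 := by
      have hD0 : (W₁ + W₂ + 2*Real.sqrt (W₁*W₂)*Real.sqrt (1-(0:ℝ)^2)) * (p*(1-p)) ≠ 0 := by
        have h1 := Real.sqrt_nonneg (W₁*W₂)
        have h2 := Real.sqrt_nonneg (1-(0:ℝ)^2)
        have : (0:ℝ) < W₁ + W₂ + 2*Real.sqrt (W₁*W₂)*Real.sqrt (1-(0:ℝ)^2) := by nlinarith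
        exact (mul_pos this hq).ne'
      apply ContinuousAt.div
      · fun_prop
      · fun_prop
      · exact hD0
    exact hc.continuousWithinAt.tendsto
  have hgl : Filter.Tendsto g (nhdsWithin 0 (Set.Ioi 0)) (nhds 1) :=
    hlim.congr' hEq
  have hkey : g 0 = 1 := tendsto_nhds_unique hg1 hgl
  -- unravel g 0
  have hs14 : Real.sqrt (1/4 - p*(1-p)*(0:ℝ)^2) = 1/2 := by
    rw [show (1/4 - p*(1-p)*(0:ℝ)^2) = (1/2)^2 by norm_num,
      Real.sqrt_sq (by norm_num : (0:ℝ) ≤ 1/2)]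
  have hs1 : Real.sqrt (1-(0:ℝ)^2) = 1 := by norm_num
  rw [hg] at hkey
  simp only [hs14, hs1] at hkey
  have hD0 : (0:ℝ) < W₁ + W₂ + 2*Real.sqrt (W₁*W₂)*1 := by
    have h1 := Real.sqrt_nonneg (W₁*W₂); nlinarith
  have heq : p*W₂ + (1-p)*W₁
      = (W₁ + W₂ + 2*Real.sqrt (W₁*W₂)) * (p*(1-p)) := by
    rw [div_eq_one_iff_eq (mul_ne_zero hD0.ne' hq.ne')] at hkey
    linear_combination hkey
  -- now algebra
  set a := Real.sqrt W₁ with hadef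
  set b := Real.sqrt W₂ with hbdef
  have ha : a^2 = W₁ := Real.sq_sqrt hW1.le
  have hb : b^2 = W₂ := Real.sq_sqrt hW2.le
  have hab : Real.sqrt (W₁*W₂) = a*b := by
    rw [Real.sqrt_mul hW1.le]
  rw [hab, ← ha, ← hb] at heq
  have hz : (p*b - (1-p)*a)^2 = 0 := by linear_combination heq
  have hz' : p*b = (1-p)*a := by
    have := pow_eq_zero_iff (n := 2) (by norm_num) |>.mp hz
    linarith
  rw [← ha, ← hb]
  linear_combination (-(p*b + (1-p)*a)) * hz'
end

section
/- Fix p ∈ (0,1) and set p₁ = p, p₂ = 1−p. Then the limit as c → 0⁺ of F_Hol(p,c) / F_opt(p,c) equals 1, where F_Hol(p,c) = p₁p₂c²/(p₁² + p₂² + 2p₁p₂√(1−c²)) is the failure rate of the quadratically weighted Belavkin measurement (weights W_k = p_k²) and F_opt(p,c) = 1/2 − √(1/4 − p₁p₂c²) is the optimal failure probability. That is, Holevo's quadratically weighted measurement is asymptotically optimal for binary pure-state ensembles. -/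
/-- Holevo's asymptotic optimality theorem, binary case: the ratio of the
failure rate of the quadratically weighted Belavkin measurement to the optimal failure rate
tends to 1 as the two states approach orthogonality. -/
theorem holevo_asymptotically_optimal (p : ℝ) (hp : p ∈ Set.Ioo (0:ℝ) 1)
    (p₁ p₂ : ℝ) (hp1 : p₁ = p) (hp2 : p₂ = 1 - p) :
    Filter.Tendsto (fun c : ℝ =>
        (p₁*p₂*c^2 / (p₁^2 + p₂^2 + 2*p₁*p₂*Real.sqrt (1-c^2))) /
        (1/2 - Real.sqrt (1/4 - p₁*p₂*c^2)))
      (nhdsWithin 0 (Set.Ioi 0)) (nhds 1) := by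
  obtain ⟨hp0, hp1'⟩ := hp
  have h12 : p₁ + p₂ = 1 := by rw [hp1, hp2]; ring
  have hq : 0 < p₁ * p₂ := by rw [hp1, hp2]; nlinarith
  have hq4 : p₁ * p₂ ≤ 1/4 := by rw [hp1, hp2]; nlinarith [sq_nonneg (2*p - 1)]
  clear hp1 hp2 hp0 hp1'
  set q := p₁ * p₂ with hqdef
  set g : ℝ → ℝ := fun c =>
    (1/2 + Real.sqrt (1/4 - q*c^2)) /
      (p₁^2 + p₂^2 + 2*q*Real.sqrt (1-c^2)) with hg
  have hden : ∀ c : ℝ, c^2 ≤ 1 →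
      0 < p₁^2 + p₂^2 + 2*q*Real.sqrt (1-c^2) := by
    intro c hc
    have h1 : 0 ≤ Real.sqrt (1 - c^2) := Real.sqrt_nonneg _
    nlinarith
  have heq : ∀ c ∈ Set.Ioo (0:ℝ) 1,
      (p₁*p₂*c^2 / (p₁^2 + p₂^2 + 2*p₁*p₂*Real.sqrt (1-c^2))) /
        (1/2 - Real.sqrt (1/4 - p₁*p₂*c^2)) = g c := by
    intro c ⟨hc0, hc1⟩
    have hc2 : c^2 ≤ 1 := by nlinarith
    have hx : (0:ℝ) ≤ 1/4 - q*c^2 := by nlinarith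
    set s := Real.sqrt (1/4 - q*c^2) with hsdef
    have hs : s ^ 2 = 1/4 - q*c^2 := Real.sq_sqrt hx
    have hs0 : 0 ≤ s := Real.sqrt_nonneg _
    have hpos : 0 < 1/2 + s := by linarith
    have hFopt : 1/2 - s = (q*c^2) / (1/2 + s) := by
      rw [eq_div_iff hpos.ne']
      nlinarith [hs]
    have hD := hden c hc2
    have hnum : 0 < q*c^2 := by positivity
    show (q*c^2 / (p₁^2 + p₂^2 + 2*p₁*p₂*Real.sqrt (1-c^2))) / (1/2 - s) = _
    rw [hFopt, hg, show (2:ℝ)*p₁*p₂ = 2*q from by rw [hqdef]; ring]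
    show q * c ^ 2 / (p₁ ^ 2 + p₂ ^ 2 + 2 * q * Real.sqrt (1 - c ^ 2)) / (q * c ^ 2 / (1/2 + s))
        = (1/2 + s) / (p₁ ^ 2 + p₂ ^ 2 + 2 * q * Real.sqrt (1 - c ^ 2))
    field_simp
  have hmem : Set.Ioo (0:ℝ) 1 ∈ nhdsWithin 0 (Set.Ioi 0) :=
    Ioo_mem_nhdsGT_of_mem (by constructor <;> norm_num)
  apply Filter.Tendsto.congr' (Filter.eventuallyEq_of_mem hmem fun c hc => (heq c hc).symm)
  have hg0 : g 0 = 1 := by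
    have h14 : Real.sqrt (1/4 - q*0^2) = 1/2 := by
      rw [show (1/4 - q*0^2 : ℝ) = (1/2)^2 by ring, Real.sqrt_sq (by norm_num)]
    have h1 : Real.sqrt (1 - (0:ℝ)^2) = 1 := by norm_num
    rw [hg]
    simp only [h14, h1]
    have : p₁^2 + p₂^2 + 2*q*1 = 1 := by rw [hqdef]; nlinarith [h12]
    rw [this]; norm_num
  have hcont : ContinuousAt g 0 := by
    apply ContinuousAt.div
    · exact continuousAt_const.add ((Real.continuous_sqrt.continuousAt).comp (by fun_prop))
    · exact continuousAt_const.add (continuousAt_const.mul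
        ((Real.continuous_sqrt.continuousAt).comp (by fun_prop)))
    · have := hden 0 (by norm_num)
      simpa using this.ne'
  have : Filter.Tendsto g (nhdsWithin 0 (Set.Ioi 0)) (nhds (g 0)) :=
    hcont.tendsto.mono_left nhdsWithin_le_nhds
  rwa [hg0] at this
end

section
/- Consider the three-state ensemble in ℂ² given by ψ₁ = (√3/2, 1/2), ψ₂ = (√3/2, −1/2), ψ₃ = (1, 0), with priors p₁ = p₂ = 4/(11 + √3) and p₃ = 1 − 2p₁ = (3 + √3)/(11 + √3). Then: (i) p₃ > p₁ and p₃ > p₂, so ψ₃ is the a priori strictly most probable state; (ii) the POVM M₁ = (1/2)[[1,1],[1,1]], M₂ = (1/2)[[1,−1],[−1,1]], M₃ = 0 achieves the maximum of Σ_k p_k ⟨ψ_k, N_k ψ_k⟩ over all POVMs (N₁,N₂,N₃) on ℂ²; and (iii) ⟨ψ₃, M₃ ψ₃⟩ = 0, i.e. under this optimal measurement the most probable state is never detected. -/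
open Matrix Filter
open scoped ComplexOrder

noncomputable section

set_option maxHeartbeats 1600000 in
/-- a three-state ensemble in `ℂ²` for which the a priori strictly most probable
state is never detected by an optimal measurement. -/
theorem most_probable_state_never_detected
    (ψ₁ ψ₂ ψ₃ : Fin 2 → ℂ)
    (hψ1 : ψ₁ = ![(Real.sqrt 3 / 2 : ℂ), (1/2 : ℂ)])
    (hψ2 : ψ₂ = ![(Real.sqrt 3 / 2 : ℂ), (-(1/2) : ℂ)])
    (hψ3 : ψ₃ = ![1, 0])
    (p₁ p₂ p₃ : ℝ)
    (hp1 : p₁ = 4 / (11 + Real.sqrt 3)) (hp2 : p₂ = p₁) (hp3 : p₃ = 1 - 2 * p₁)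
    (M₁ M₂ M₃ : Matrix (Fin 2) (Fin 2) ℂ)
    (hM1 : M₁ = (1/2 : ℂ) • !![1, 1; 1, 1])
    (hM2 : M₂ = (1/2 : ℂ) • !![1, -1; -1, 1])
    (hM3 : M₃ = 0) :
    (p₃ > p₁ ∧ p₃ > p₂)
    ∧ (IsPOVM ![M₁, M₂, M₃] ∧
        ∀ N : Fin 3 → Matrix (Fin 2) (Fin 2) ℂ, IsPOVM N →
          p₁ * expVal (N 0) ψ₁ + p₂ * expVal (N 1) ψ₂ + p₃ * expVal (N 2) ψ₃
            ≤ p₁ * expVal M₁ ψ₁ + p₂ * expVal M₂ ψ₂ + p₃ * expVal M₃ ψ₃)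
    ∧ expVal M₃ ψ₃ = 0 := by
  set s := Real.sqrt 3 with hs_def
  have hs0 : 0 ≤ s := Real.sqrt_nonneg 3
  have hs2 : s * s = 3 := Real.mul_self_sqrt (by norm_num)
  have hs1 : 1 < s := by nlinarith
  have hden : (0:ℝ) < 11 + s := by linarith
  have hp' : p₁ * (11 + s) = 4 := by rw [hp1]; field_simp
  have hp0 : 0 < p₁ := by rw [hp1]; positivity
  have h1 : ((s:ℂ)/2) = ((s/2 : ℝ) : ℂ) := by push_cast; ring
  have h2 : ((1:ℂ)/2) = ((1/2 : ℝ) : ℂ) := by push_cast; ring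
  have h2' : (-(1/2) : ℂ) = ((-(1/2) : ℝ) : ℂ) := by push_cast; ring
  have h3 : (1 : ℂ) = ((1 : ℝ) : ℂ) := by norm_num
  have h4 : (0 : ℂ) = ((0 : ℝ) : ℂ) := by norm_num
  have simpset : True := trivial
  -- values of the fixed measurement
  have hF1 : expVal M₁ ψ₁ = (2 + s)/4 := by
    rw [hM1, hψ1]
    simp only [expVal, h1, h2, dotProduct, mulVec, Fin.sum_univ_two,
      Matrix.cons_val_zero, Matrix.cons_val_one, Matrix.head_cons, Pi.star_apply,
      RCLike.star_def, Complex.conj_ofReal, Matrix.smul_apply, smul_eq_mul,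
      Matrix.cons_val', Matrix.empty_val', Matrix.cons_val_fin_one,
      Complex.add_re, Complex.mul_re, Complex.mul_im, Complex.one_re, Complex.one_im,
      Complex.ofReal_re, Complex.ofReal_im, Complex.add_im, Complex.div_re,
      Complex.div_im, Complex.normSq, MonoidWithZeroHom.coe_mk, ZeroHom.coe_mk]
    norm_num
    linear_combination hs2/8
  have hF2 : expVal M₂ ψ₂ = (2 + s)/4 := by
    rw [hM2, hψ2]
    simp only [expVal, h1, h2', dotProduct, mulVec, Fin.sum_univ_two,
      Matrix.cons_val_zero, Matrix.cons_val_one, Matrix.head_cons, Pi.star_apply,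
      RCLike.star_def, Complex.conj_ofReal, Matrix.smul_apply, smul_eq_mul,
      Matrix.cons_val', Matrix.empty_val', Matrix.cons_val_fin_one,
      Complex.add_re, Complex.mul_re, Complex.mul_im, Complex.one_re, Complex.one_im,
      Complex.ofReal_re, Complex.ofReal_im, Complex.add_im, Complex.div_re,
      Complex.div_im, Complex.normSq, MonoidWithZeroHom.coe_mk, ZeroHom.coe_mk]
    norm_num
    linear_combination hs2/8
  have hF3 : expVal M₃ ψ₃ = 0 := by simp [expVal, hM3]
  refine ⟨⟨?_, ?_⟩, ⟨⟨?_, ?_⟩, ?_⟩, ?_⟩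
  · rw [hp3]; nlinarith
  · rw [hp3, hp2]; nlinarith
  · -- all members are PSD
    intro k
    fin_cases k
    · show M₁.PosSemidef
      rw [hM1, Matrix.posSemidef_iff_dotProduct_mulVec]
      constructor
      · ext i j; fin_cases i <;> fin_cases j <;> simp [Matrix.conjTranspose_apply]
      · intro x
        rw [Complex.le_def]
        constructor <;>
        · norm_num [dotProduct, mulVec, Fin.sum_univ_two, Matrix.smul_apply,
            Complex.add_re, Complex.mul_re, Complex.mul_im, Complex.add_im, smul_eq_mul]
          nlinarith [sq_nonneg ((x 0).re + (x 1).re), sq_nonneg ((x 0).im + (x 1).im)]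
    · show M₂.PosSemidef
      rw [hM2, Matrix.posSemidef_iff_dotProduct_mulVec]
      constructor
      · ext i j; fin_cases i <;> fin_cases j <;> simp [Matrix.conjTranspose_apply]
      · intro x
        rw [Complex.le_def]
        constructor <;>
        · norm_num [dotProduct, mulVec, Fin.sum_univ_two, Matrix.smul_apply,
            Complex.add_re, Complex.mul_re, Complex.mul_im, Complex.add_im, smul_eq_mul]
          nlinarith [sq_nonneg ((x 0).re - (x 1).re), sq_nonneg ((x 0).im - (x 1).im)]
    · show M₃.PosSemidef
      rw [hM3]; exact Matrix.PosSemidef.zero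
  · -- sum to identity
    rw [Fin.sum_univ_three]
    simp only [Matrix.cons_val_zero, Matrix.cons_val_one, Matrix.head_cons]
    rw [hM1, hM2, hM3]
    ext i j
    fin_cases i <;> fin_cases j <;> norm_num [Matrix.one_apply, Matrix.cons_val_two, Matrix.tail_cons]
  · -- optimality
    intro N hN
    obtain ⟨hpsd, hsum⟩ := hN
    rw [Fin.sum_univ_three] at hsum
    have e00 := congrArg Complex.re (congrFun (congrFun hsum 0) 0)
    have e11 := congrArg Complex.re (congrFun (congrFun hsum 1) 1)
    simp only [Matrix.add_apply, Matrix.one_apply_eq, Complex.add_re, Complex.one_re] at e00 e11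
    have q1 := (Complex.le_def.mp ((hpsd 0).dotProduct_mulVec_nonneg ![1, -1])).1
    have q2 := (Complex.le_def.mp ((hpsd 1).dotProduct_mulVec_nonneg ![1, 1])).1
    have q3 := (Complex.le_def.mp ((hpsd 2).dotProduct_mulVec_nonneg ![0, 1])).1
    norm_num [dotProduct, mulVec, Fin.sum_univ_two, Complex.add_re, Complex.mul_re,
      Complex.mul_im, Complex.add_im] at q1 q2 q3
    have T1 := mul_nonneg (mul_nonneg hs0 hp0.le) q1
    have T2 := mul_nonneg (mul_nonneg hs0 hp0.le) q2
    have T3 := mul_nonneg (mul_nonneg (by linarith : (0:ℝ) ≤ 1 + s) hp0.le) q3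
    have r00p : p₁ * ((N 0 0 0).re + (N 1 0 0).re + (N 2 0 0).re) = p₁ := by
      linear_combination p₁ * e00
    have r00ps : p₁ * s * ((N 0 0 0).re + (N 1 0 0).re + (N 2 0 0).re) = p₁ * s := by
      linear_combination p₁ * s * e00
    have r11p : p₁ * ((N 0 1 1).re + (N 1 1 1).re + (N 2 1 1).re) = p₁ := by
      linear_combination p₁ * e11
    have r11ps : p₁ * s * ((N 0 1 1).re + (N 1 1 1).re + (N 2 1 1).re) = p₁ * s := by
      linear_combination p₁ * s * e11
    have hE1 : expVal (N 0) ψ₁ =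
        3/4 * (N 0 0 0).re + s/4 * (N 0 0 1).re + s/4 * (N 0 1 0).re + 1/4 * (N 0 1 1).re := by
      rw [hψ1]
      simp only [expVal, h1, h2, dotProduct, mulVec, Fin.sum_univ_two,
        Matrix.cons_val_zero, Matrix.cons_val_one, Matrix.head_cons, Pi.star_apply,
        RCLike.star_def, Complex.conj_ofReal, Complex.add_re, Complex.mul_re,
        Complex.mul_im, Complex.ofReal_re, Complex.ofReal_im, Complex.add_im]
      linear_combination ((N 0 0 0).re / 4) * hs2
    have hE2 : expVal (N 1) ψ₂ =
        3/4 * (N 1 0 0).re - s/4 * (N 1 0 1).re - s/4 * (N 1 1 0).re + 1/4 * (N 1 1 1).re := by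
      rw [hψ2]
      simp only [expVal, h1, h2', dotProduct, mulVec, Fin.sum_univ_two,
        Matrix.cons_val_zero, Matrix.cons_val_one, Matrix.head_cons, Pi.star_apply,
        RCLike.star_def, Complex.conj_ofReal, Complex.add_re, Complex.mul_re,
        Complex.mul_im, Complex.ofReal_re, Complex.ofReal_im, Complex.add_im]
      linear_combination ((N 1 0 0).re / 4) * hs2
    have hE3 : expVal (N 2) ψ₃ = (N 2 0 0).re := by
      rw [hψ3]
      simp only [expVal, h3, h4, dotProduct, mulVec, Fin.sum_univ_two,
        Matrix.cons_val_zero, Matrix.cons_val_one, Matrix.head_cons, Pi.star_apply,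
        RCLike.star_def, Complex.conj_ofReal, Complex.add_re, Complex.mul_re,
        Complex.mul_im, Complex.ofReal_re, Complex.ofReal_im, Complex.add_im]
      ring
    have hp3' : 1 - 2 * p₁ = p₁ * (3 + s) / 4 := by linarith [hp']
    rw [hE1, hE2, hE3, hF1, hF2, hF3, hp2, hp3, hp3']
    nlinarith [T1, T2, T3, r00p, r00ps, r11p, r11ps]
  · exact hF3
end
end

section
/- Let ψ₁,…,ψ_m be unit vectors in ℂ^d with priors p_k ≥ 0, Σ p_k = 1, and let (M_k) be a POVM on ℂ^d. Define L := Σ_k p_k M_k |ψ_k⟩⟨ψ_k| and H := (L + L†)/2. If H − p_k |ψ_k⟩⟨ψ_k| is positive semidefinite for every k, then (M_k) is optimal: for every POVM (N_k) on ℂ^d, Σ_k p_k ⟨ψ_k, M_k ψ_k⟩ ≥ Σ_k p_k ⟨ψ_k, N_k ψ_k⟩. -/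
open Matrix Filter
open scoped ComplexOrder

noncomputable section

lemma trace_mul_psd_re_nonneg {d : ℕ} {A B : Matrix (Fin d) (Fin d) ℂ}
    (hA : A.PosSemidef) (hB : B.PosSemidef) : 0 ≤ (trace (A * B)).re := by
  obtain ⟨C, rfl⟩ : ∃ C : Matrix (Fin d) (Fin d) ℂ, B = Cᴴ * C := by
    open scoped MatrixOrder in
    exact CStarAlgebra.nonneg_iff_eq_star_mul_self.mp hB.nonneg
  rw [← Matrix.mul_assoc, Matrix.trace_mul_cycle]
  rw [Matrix.trace, Complex.re_sum]
  apply Finset.sum_nonneg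
  intro i _
  have h := hA.re_dotProduct_nonneg (star (C i))
  convert h using 2
  · rfl
  simp only [Matrix.diag, Matrix.mul_apply, Matrix.mulVec, dotProduct,
    Finset.mul_sum, Finset.sum_mul, star_star, Pi.star_apply, RCLike.star_def]
  rw [Finset.sum_comm]
  congr 1
  exact Finset.sum_congr rfl fun x _ => Finset.sum_congr rfl fun y _ => by
    simp [Matrix.conjTranspose_apply]; ring

lemma trace_mul_proj {d : ℕ} (A : Matrix (Fin d) (Fin d) ℂ) (ψ : Fin d → ℂ) :
    trace (A * proj ψ) = star ψ ⬝ᵥ A *ᵥ ψ := by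
  simp only [proj, Matrix.trace, Matrix.diag, Matrix.mul_apply, vecMulVec_apply,
    Matrix.mulVec, dotProduct, Finset.mul_sum, Finset.sum_mul]
  exact Finset.sum_congr rfl fun x _ => Finset.sum_congr rfl fun y _ => by
    simp; ring

/-- Holevo's sufficient optimality condition: if
`H := (L + L†)/2` with `L := ∑ k, p k • (M k * |ψ k⟩⟨ψ k|)` satisfies
`H − p k • |ψ k⟩⟨ψ k| ≥ 0` for all `k`, then the POVM `(M k)` is optimal. -/
theorem lagrange_condition_implies_optimal {d m : ℕ}
    (ψ : Fin m → Fin d → ℂ) (hψ : ∀ k, star (ψ k) ⬝ᵥ ψ k = 1)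
    (p : Fin m → ℝ) (hp : ∀ k, 0 ≤ p k) (hp1 : ∑ k, p k = 1)
    (M : Fin m → Matrix (Fin d) (Fin d) ℂ) (hM : IsPOVM M)
    (L H : Matrix (Fin d) (Fin d) ℂ)
    (hL : L = ∑ k, p k • (M k * proj (ψ k)))
    (hH : H = (2:ℂ)⁻¹ • (L + Lᴴ))
    (hcond : ∀ k, (H - p k • proj (ψ k)).PosSemidef) :
    ∀ N : Fin m → Matrix (Fin d) (Fin d) ℂ, IsPOVM N →
      ∑ k, p k * expVal (N k) (ψ k) ≤ ∑ k, p k * expVal (M k) (ψ k) := by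
  intro N hN
  obtain ⟨hNpsd, hNsum⟩ := hN
  have key : ∀ k, p k * expVal (N k) (ψ k) ≤ (trace (H * N k)).re := by
    intro k
    have h0 := trace_mul_psd_re_nonneg (hcond k) (hNpsd k)
    rw [Matrix.sub_mul, Matrix.smul_mul, trace_sub, trace_smul] at h0
    have h1 : trace (proj (ψ k) * N k) = star (ψ k) ⬝ᵥ (N k) *ᵥ (ψ k) := by
      rw [Matrix.trace_mul_comm]; exact trace_mul_proj _ _
    rw [Complex.sub_re, Complex.smul_re, h1, smul_eq_mul] at h0
    simp only [expVal]
    linarith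
  have hre : (trace H).re = ∑ k, p k * expVal (M k) (ψ k) := by
    have hLre : (trace L).re = ∑ k, p k * expVal (M k) (ψ k) := by
      rw [hL, trace_sum, Complex.re_sum]
      refine Finset.sum_congr rfl fun k _ => ?_
      rw [trace_smul, Complex.smul_re, trace_mul_proj]
      rfl
    rw [hH, trace_smul, trace_add, trace_conjTranspose, ← hLre]
    simp [Complex.smul_re, Complex.add_re, Complex.star_def]
    ring
  calc ∑ k, p k * expVal (N k) (ψ k)
      ≤ ∑ k, (trace (H * N k)).re := Finset.sum_le_sum fun k _ => key k
    _ = (trace H).re := by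
        rw [← Complex.re_sum, ← trace_sum, ← Finset.mul_sum, hNsum, mul_one]
    _ = ∑ k, p k * expVal (M k) (ψ k) := hre
end
end
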